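/- arXiv:2103.16629 — 6 statements merged into one kernel-verified Lean document; each statement's English description precedes it below -/
import Mathlib

section
/- Let γ ∈ (0,1) and let π̂ : ℝⁿ → ℝᵐ be a feedback policy that is Lipschitz on ℝⁿ with constant ℓ_{π̂}. For δ ∈ ℝⁿ define the perturbed policy π̂_δ(x) = π̂(x + δ). Assume: (i) for every δ with ‖δ‖ ≤ ζ the closed-loop maps f_{π̂} and f_{π̂_δ} map B_r(0) into itself, and the value functions V^{π̂} and V^{π̂_δ} are well defined and bounded on B_r(0); (ii) the stage cost c is Lipschitz in the control with constant ℓ_c^u and the dynamics f is Lipschitz in the control with constant ℓ_f^u; (iii) V^{π̂} is Lipschitz on B_r(0) with constant ℓ_{V^{π̂}}. Then sup { V^{π̂_δ}(x) − V^{π̂}(x) : x ∈ B_r(0), ‖δ‖ ≤ ζ } ≤ ((ℓ_c^u + γ ℓ_{V^{π̂}} ℓ_f^u)/(1 − γ)) · ℓ_{π̂} ζ. -/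
/-!
STATEMENT 3: Robustness to measurement perturbations. For a Lipschitz learned policy `π̂`
with constant `ℓ_π̂` and perturbed policies `π̂_δ(x) = π̂(x+δ)` with `‖δ‖ ≤ ζ`, under the
stated invariance, well-definedness/boundedness, and Lipschitz assumptions,
`sup { V^{π̂_δ}(x) − V^{π̂}(x) : x ∈ B_r(0), ‖δ‖ ≤ ζ } ≤ ((ℓ_c^u + γ ℓ_{V^π̂} ℓ_f^u)/(1−γ)) ℓ_π̂ ζ`.
-/

open Metric

/-- The closed-loop map `f_π(x) = f(x, π(x))`. -/
def cloop {E U : Type*} (f : E → U → E) (π : E → U) : E → E := fun x => f x (π x)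

/-- The discounted value function `V^π(x) = ∑_t γ^t c(f_π^t(x), π(f_π^t(x)))`. -/
noncomputable def Vval {E U : Type*} (f : E → U → E) (c : E → U → ℝ) (γ : ℝ)
    (π : E → U) (x : E) : ℝ :=
  ∑' t : ℕ, γ ^ t * c ((cloop f π)^[t] x) (π ((cloop f π)^[t] x))


lemma bellman_aux {E U : Type*} (f : E → U → E) (c : E → U → ℝ) (γ : ℝ) (π : E → U) (x : E)
    (h : Summable fun t : ℕ => γ ^ t * c ((cloop f π)^[t] x) (π ((cloop f π)^[t] x))) :
    Vval f c γ π x = c x (π x) + γ * Vval f c γ π (cloop f π x) := by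
  unfold Vval
  rw [Summable.tsum_eq_zero_add h]
  simp only [pow_zero, one_mul, Function.iterate_zero_apply, Function.iterate_succ_apply,
    pow_succ', mul_assoc]
  rw [tsum_mul_left]

theorem robustness_of_learned_policy {n m : ℕ}
    (f : EuclideanSpace ℝ (Fin n) → EuclideanSpace ℝ (Fin m) → EuclideanSpace ℝ (Fin n))
    (c : EuclideanSpace ℝ (Fin n) → EuclideanSpace ℝ (Fin m) → ℝ)
    (hc_nonneg : ∀ x u, 0 ≤ c x u)
    (γ : ℝ) (hγ : γ ∈ Set.Ioo (0 : ℝ) 1)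
    (r ζ : ℝ) (hζ : 0 ≤ ζ)
    (πhat : EuclideanSpace ℝ (Fin n) → EuclideanSpace ℝ (Fin m))
    (ℓπ : ℝ) (hℓπ : 0 ≤ ℓπ)
    (hπhat_lip : ∀ x y, ‖πhat x - πhat y‖ ≤ ℓπ * ‖x - y‖)
    -- (i) invariance of the ball and well-definedness/boundedness of the value functions
    (hinv_hat : ∀ x ∈ closedBall (0 : EuclideanSpace ℝ (Fin n)) r,
      cloop f πhat x ∈ closedBall (0 : EuclideanSpace ℝ (Fin n)) r)
    (hinv_pert : ∀ δ : EuclideanSpace ℝ (Fin n), ‖δ‖ ≤ ζ →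
      ∀ x ∈ closedBall (0 : EuclideanSpace ℝ (Fin n)) r,
        cloop f (fun z => πhat (z + δ)) x ∈ closedBall (0 : EuclideanSpace ℝ (Fin n)) r)
    (hsum_hat : ∀ x ∈ closedBall (0 : EuclideanSpace ℝ (Fin n)) r,
      Summable fun t : ℕ => γ ^ t * c ((cloop f πhat)^[t] x) (πhat ((cloop f πhat)^[t] x)))
    (hsum_pert : ∀ δ : EuclideanSpace ℝ (Fin n), ‖δ‖ ≤ ζ →
      ∀ x ∈ closedBall (0 : EuclideanSpace ℝ (Fin n)) r,
        Summable fun t : ℕ => γ ^ t *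
          c ((cloop f (fun z => πhat (z + δ)))^[t] x)
            (πhat ((cloop f (fun z => πhat (z + δ)))^[t] x + δ)))
    (hbdd_hat : ∃ M : ℝ, ∀ x ∈ closedBall (0 : EuclideanSpace ℝ (Fin n)) r,
      |Vval f c γ πhat x| ≤ M)
    (hbdd_pert : ∃ M : ℝ, ∀ δ : EuclideanSpace ℝ (Fin n), ‖δ‖ ≤ ζ →
      ∀ x ∈ closedBall (0 : EuclideanSpace ℝ (Fin n)) r,
        |Vval f c γ (fun z => πhat (z + δ)) x| ≤ M)
    -- (ii) Lipschitz continuity of the stage cost and of the dynamics in the control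
    (ℓcu ℓfu : ℝ) (hℓcu : 0 ≤ ℓcu) (hℓfu : 0 ≤ ℓfu)
    (hc_lip : ∀ x u₁ u₂, |c x u₁ - c x u₂| ≤ ℓcu * ‖u₁ - u₂‖)
    (hf_lip : ∀ x u₁ u₂, ‖f x u₁ - f x u₂‖ ≤ ℓfu * ‖u₁ - u₂‖)
    -- (iii) Lipschitz continuity of `V^π̂` on the ball
    (ℓV : ℝ) (hℓV : 0 ≤ ℓV)
    (hV_lip : ∀ x ∈ closedBall (0 : EuclideanSpace ℝ (Fin n)) r,
      ∀ y ∈ closedBall (0 : EuclideanSpace ℝ (Fin n)) r,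
        |Vval f c γ πhat x - Vval f c γ πhat y| ≤ ℓV * ‖x - y‖) :
    sSup {s : ℝ | ∃ x ∈ closedBall (0 : EuclideanSpace ℝ (Fin n)) r,
        ∃ δ : EuclideanSpace ℝ (Fin n), ‖δ‖ ≤ ζ ∧
          s = Vval f c γ (fun z => πhat (z + δ)) x - Vval f c γ πhat x}
      ≤ (ℓcu + γ * ℓV * ℓfu) / (1 - γ) * ℓπ * ζ := by

  obtain ⟨hγ0, hγ1⟩ := hγ
  have h1γ : (0:ℝ) < 1 - γ := by linarith
  have hKnn : 0 ≤ (ℓcu + γ * ℓV * ℓfu) / (1 - γ) * ℓπ * ζ := by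
    apply mul_nonneg (mul_nonneg (div_nonneg (by positivity) h1γ.le) hℓπ) hζ
  apply Real.sSup_le _ hKnn
  rintro s ⟨x, hx, δ, hδ, rfl⟩
  obtain ⟨M, hM⟩ := hbdd_hat
  obtain ⟨M', hM'⟩ := hbdd_pert
  set B := closedBall (0 : EuclideanSpace ℝ (Fin n)) r with hB
  set T : Set ℝ := {s | ∃ y ∈ B, s = Vval f c γ (fun z => πhat (z + δ)) y - Vval f c γ πhat y}
    with hT
  have hTne : T.Nonempty := ⟨_, x, hx, rfl⟩
  have hTbdd : BddAbove T := by
    refine ⟨M' + M, ?_⟩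
    rintro s ⟨y, hy, rfl⟩
    have h1 := hM' δ hδ y hy
    have h2 := hM y hy
    have h3 := le_abs_self (Vval f c γ (fun z => πhat (z + δ)) y)
    have h4 := neg_abs_le (Vval f c γ πhat y)
    linarith
  set S := sSup T with hS
  have hΔπbound : ∀ y : EuclideanSpace ℝ (Fin n), ‖πhat (y + δ) - πhat y‖ ≤ ℓπ * ζ := by
    intro y
    have h1 := hπhat_lip (y + δ) y
    have h2 : y + δ - y = δ := by abel
    rw [h2] at h1
    exact h1.trans (mul_le_mul_of_nonneg_left hδ hℓπ)
  have key : ∀ y ∈ B, Vval f c γ (fun z => πhat (z + δ)) y - Vval f c γ πhat y ≤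
      (ℓcu + γ * ℓV * ℓfu) * (ℓπ * ζ) + γ * S := by
    intro y hy
    have B1 : Vval f c γ (fun z => πhat (z + δ)) y = c y (πhat (y + δ)) +
        γ * Vval f c γ (fun z => πhat (z + δ)) (cloop f (fun z => πhat (z + δ)) y) :=
      bellman_aux f c γ (fun z => πhat (z + δ)) y (hsum_pert δ hδ y hy)
    have B2 : Vval f c γ πhat y = c y (πhat y) + γ * Vval f c γ πhat (cloop f πhat y) :=
      bellman_aux f c γ πhat y (hsum_hat y hy)
    have hx' : cloop f (fun z => πhat (z + δ)) y ∈ B := hinv_pert δ hδ y hy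
    have hx'' : cloop f πhat y ∈ B := hinv_hat y hy
    have hΔc : c y (πhat (y + δ)) - c y (πhat y) ≤ ℓcu * (ℓπ * ζ) := by
      have h1 := (abs_le.mp ((hc_lip y (πhat (y + δ)) (πhat y)).trans
        (mul_le_mul_of_nonneg_left (hΔπbound y) hℓcu))).2
      linarith [le_abs_self (c y (πhat (y + δ)) - c y (πhat y))]
    have hΔf : ‖cloop f (fun z => πhat (z + δ)) y - cloop f πhat y‖ ≤ ℓfu * (ℓπ * ζ) := by
      have h1 : ‖f y (πhat (y + δ)) - f y (πhat y)‖ ≤ ℓfu * ‖πhat (y + δ) - πhat y‖ :=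
        hf_lip y (πhat (y + δ)) (πhat y)
      exact h1.trans (mul_le_mul_of_nonneg_left (hΔπbound y) hℓfu)
    have hΔV : Vval f c γ πhat (cloop f (fun z => πhat (z + δ)) y) -
        Vval f c γ πhat (cloop f πhat y) ≤ ℓV * (ℓfu * (ℓπ * ζ)) := by
      have h1 := (hV_lip _ hx' _ hx'').trans (mul_le_mul_of_nonneg_left hΔf hℓV)
      linarith [le_abs_self (Vval f c γ πhat (cloop f (fun z => πhat (z + δ)) y) -
        Vval f c γ πhat (cloop f πhat y))]
    have hSx' : Vval f c γ (fun z => πhat (z + δ)) (cloop f (fun z => πhat (z + δ)) y) -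
        Vval f c γ πhat (cloop f (fun z => πhat (z + δ)) y) ≤ S :=
      le_csSup hTbdd ⟨_, hx', rfl⟩
    have hγmul1 := mul_le_mul_of_nonneg_left hSx' hγ0.le
    have hγmul2 := mul_le_mul_of_nonneg_left hΔV hγ0.le
    rw [B1, B2]
    nlinarith
  have hSle : S ≤ (ℓcu + γ * ℓV * ℓfu) * (ℓπ * ζ) + γ * S := by
    apply csSup_le hTne
    rintro s ⟨y, hy, rfl⟩
    exact key y hy
  have hS2 : S ≤ (ℓcu + γ * ℓV * ℓfu) / (1 - γ) * ℓπ * ζ := by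
    rw [div_mul_eq_mul_div, div_mul_eq_mul_div, le_div_iff₀ h1γ]
    nlinarith
  calc Vval f c γ (fun z => πhat (z + δ)) x - Vval f c γ πhat x ≤ S :=
        le_csSup hTbdd ⟨x, hx, rfl⟩
    _ ≤ _ := hS2
end

section
/- Let c : ℝⁿ × ℝᵐ → ℝ be differentiable with a λ-Lipschitz gradient, nonnegative, and satisfy c(0,0) = 0. Let π be a feedback policy with ‖π(x)‖ ≤ κ̄ ‖x‖ for all x. Then c_π(x) ≤ (λ/2)(1 + κ̄²)‖x‖² for all x; moreover, if in addition the closed-loop trajectory satisfies Σ_{t=0}^∞ ‖f_π^t(x)‖² ≤ θ ‖x‖² for all x, then for every γ ∈ (0,1) the value function satisfies V^π(x) ≤ (λ/2)(1 + κ̄²) θ ‖x‖². -/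
/-- The stage cost viewed as a function on the joint state-control space, equipped with
the Euclidean (`L²`) product norm, so that `‖(x,u)‖² = ‖x‖² + ‖u‖²`. -/
def jointCost {n m : ℕ}
    (c : EuclideanSpace ℝ (Fin n) → EuclideanSpace ℝ (Fin m) → ℝ) :
    WithLp 2 (EuclideanSpace ℝ (Fin n) × EuclideanSpace ℝ (Fin m)) → ℝ :=
  fun p => c (WithLp.equiv 2 _ p).1 (WithLp.equiv 2 _ p).2

lemma quad_bound {n m : ℕ}
    (g : WithLp 2 (EuclideanSpace ℝ (Fin n) × EuclideanSpace ℝ (Fin m)) → ℝ)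
    (lam : ℝ) (hlam : 0 < lam)
    (hdiff : Differentiable ℝ g)
    (hlip : ∀ p q, ‖fderiv ℝ g p - fderiv ℝ g q‖ ≤ lam * ‖p - q‖)
    (hnonneg : ∀ p, 0 ≤ g p) (h0 : g 0 = 0)
    (p : WithLp 2 (EuclideanSpace ℝ (Fin n) × EuclideanSpace ℝ (Fin m))) :
    g p ≤ lam / 2 * ‖p‖ ^ 2 := by
  have hmin : IsLocalMin g 0 :=
    Filter.Eventually.of_forall (fun q => by rw [h0]; exact hnonneg q)
  have hf0 : fderiv ℝ g 0 = 0 := hmin.fderiv_eq_zero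
  have hcont : Continuous (fderiv ℝ g) := by
    have : LipschitzWith (Real.toNNReal lam) (fderiv ℝ g) := by
      apply LipschitzWith.of_dist_le_mul
      intro q r
      rw [dist_eq_norm, dist_eq_norm]
      simpa [Real.coe_toNNReal _ hlam.le] using hlip q r
    exact this.continuous
  have hD : ∀ t : ℝ, HasDerivAt (fun s : ℝ => g (s • p)) ((fderiv ℝ g (t • p)) p) t := by
    intro t
    haveI : ContinuousSMul ℝ (WithLp 2 (EuclideanSpace ℝ (Fin n) × EuclideanSpace ℝ (Fin m))) :=
      IsBoundedSMul.continuousSMul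
    have h1 : HasDerivAt (fun s : ℝ => s • p) p t := by
      simpa using (hasDerivAt_id t).smul_const p
    have h2 := (hdiff (t • p)).hasFDerivAt
    exact h2.comp_hasDerivAt t h1
  have hDc : Continuous fun t : ℝ => (fderiv ℝ g (t • p)) p := by
    have hc1 : Continuous fun t : ℝ => fderiv ℝ g (t • p) :=
      hcont.comp (by continuity)
    exact (ContinuousLinearMap.apply ℝ ℝ p).continuous.comp hc1
  have hint : g ((1:ℝ) • p) - g ((0:ℝ) • p) = ∫ t in (0:ℝ)..1, (fderiv ℝ g (t • p)) p :=
    (intervalIntegral.integral_eq_sub_of_hasDerivAt (fun t _ => hD t)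
      (hDc.intervalIntegrable 0 1)).symm
  have hbound : ∀ t ∈ Set.Icc (0:ℝ) 1, (fderiv ℝ g (t • p)) p ≤ lam * t * ‖p‖ ^ 2 := by
    intro t ht
    have h1 : (fderiv ℝ g (t • p)) p = ((fderiv ℝ g (t • p)) - fderiv ℝ g 0) p := by
      simp [hf0]
    rw [h1]
    calc ((fderiv ℝ g (t • p)) - fderiv ℝ g 0) p
        ≤ ‖((fderiv ℝ g (t • p)) - fderiv ℝ g 0) p‖ := le_abs_self _
      _ ≤ ‖(fderiv ℝ g (t • p)) - fderiv ℝ g 0‖ * ‖p‖ :=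
          ContinuousLinearMap.le_opNorm _ _
      _ ≤ (lam * ‖t • p - 0‖) * ‖p‖ :=
          mul_le_mul_of_nonneg_right (hlip _ _) (norm_nonneg _)
      _ = lam * t * ‖p‖ ^ 2 := by
          rw [sub_zero, norm_smul, Real.norm_eq_abs, abs_of_nonneg ht.1]
          ring
  have hile : (∫ t in (0:ℝ)..1, (fderiv ℝ g (t • p)) p)
      ≤ ∫ t in (0:ℝ)..1, lam * t * ‖p‖ ^ 2 :=
    intervalIntegral.integral_mono_on zero_le_one
      (hDc.intervalIntegrable 0 1)
      (((continuous_const.mul continuous_id').mul continuous_const).intervalIntegrable 0 1)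
      hbound
  have hval : (∫ t in (0:ℝ)..1, lam * t * ‖p‖ ^ 2) = lam / 2 * ‖p‖ ^ 2 := by
    have heq : (∫ t in (0:ℝ)..1, lam * t * ‖p‖ ^ 2)
        = (lam * ‖p‖ ^ 2) * ∫ t in (0:ℝ)..1, t := by
      rw [← intervalIntegral.integral_const_mul]
      congr 1; ext t; ring
    rw [heq, integral_id]; ring
  have h0p : g ((0:ℝ) • p) = 0 := by simpa using h0
  rw [one_smul, h0p, sub_zero] at hint
  rw [hint]
  exact hile.trans hval.le

theorem smooth_cost_upper_bound {n m : ℕ}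
    (c : EuclideanSpace ℝ (Fin n) → EuclideanSpace ℝ (Fin m) → ℝ)
    (lam : ℝ) (hlam : 0 < lam)
    (hdiff : Differentiable ℝ (jointCost c))
    (hgrad_lip : ∀ p q, ‖fderiv ℝ (jointCost c) p - fderiv ℝ (jointCost c) q‖ ≤ lam * ‖p - q‖)
    (hc_nonneg : ∀ x u, 0 ≤ c x u)
    (hc00 : c 0 0 = 0)
    (π : EuclideanSpace ℝ (Fin n) → EuclideanSpace ℝ (Fin m))
    (κ : ℝ) (hκ : 0 ≤ κ)
    (hπ : ∀ x, ‖π x‖ ≤ κ * ‖x‖) :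
    (∀ x, c x (π x) ≤ lam / 2 * (1 + κ ^ 2) * ‖x‖ ^ 2) ∧
    (∀ (f : EuclideanSpace ℝ (Fin n) → EuclideanSpace ℝ (Fin m) → EuclideanSpace ℝ (Fin n))
      (θ : ℝ),
      (∀ x, Summable fun t : ℕ => ‖(cloop f π)^[t] x‖ ^ 2) →
      (∀ x, (∑' t : ℕ, ‖(cloop f π)^[t] x‖ ^ 2) ≤ θ * ‖x‖ ^ 2) →
      ∀ γ ∈ Set.Ioo (0 : ℝ) 1, ∀ x,
        Vval f c γ π x ≤ lam / 2 * (1 + κ ^ 2) * θ * ‖x‖ ^ 2) := by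
  have hg0 : jointCost c 0 = 0 := hc00
  have hgnn : ∀ p, 0 ≤ jointCost c p := fun p => hc_nonneg _ _
  have key : ∀ x, c x (π x) ≤ lam / 2 * (1 + κ ^ 2) * ‖x‖ ^ 2 := by
    intro x
    set p : WithLp 2 (EuclideanSpace ℝ (Fin n) × EuclideanSpace ℝ (Fin m)) :=
      (WithLp.equiv 2 _).symm (x, π x) with hp
    have h1 : c x (π x) = jointCost c p := rfl
    have h2 := quad_bound (jointCost c) lam hlam hdiff hgrad_lip hgnn hg0 p
    have hnorm : ‖p‖ ^ 2 = ‖x‖ ^ 2 + ‖π x‖ ^ 2 := WithLp.prod_norm_sq_eq_of_L2 p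
    have hπx : ‖π x‖ ^ 2 ≤ κ ^ 2 * ‖x‖ ^ 2 := by
      have := hπ x
      nlinarith [norm_nonneg (π x), norm_nonneg x]
    rw [h1]
    calc jointCost c p ≤ lam / 2 * ‖p‖ ^ 2 := h2
      _ ≤ lam / 2 * (1 + κ ^ 2) * ‖x‖ ^ 2 := by
          rw [hnorm]; nlinarith [norm_nonneg x]
  refine ⟨key, ?_⟩
  intro f θ hsum hθ γ hγ x
  set K := lam / 2 * (1 + κ ^ 2) with hK
  have hKnn : 0 ≤ K := by positivity
  set y : ℕ → EuclideanSpace ℝ (Fin n) := fun t => (cloop f π)^[t] x with hy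
  have hterm : ∀ t : ℕ, γ ^ t * c (y t) (π (y t)) ≤ K * ‖y t‖ ^ 2 := by
    intro t
    have h1 : γ ^ t ≤ 1 := pow_le_one₀ hγ.1.le hγ.2.le
    have h2 : 0 ≤ c (y t) (π (y t)) := hc_nonneg _ _
    calc γ ^ t * c (y t) (π (y t)) ≤ 1 * c (y t) (π (y t)) :=
          mul_le_mul_of_nonneg_right h1 h2
      _ = c (y t) (π (y t)) := one_mul _
      _ ≤ K * ‖y t‖ ^ 2 := key (y t)
  have hsb : Summable fun t : ℕ => K * ‖y t‖ ^ 2 := (hsum x).mul_left K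
  have hsa : Summable fun t : ℕ => γ ^ t * c (y t) (π (y t)) :=
    Summable.of_nonneg_of_le
      (fun t => mul_nonneg (pow_nonneg hγ.1.le t) (hc_nonneg _ _)) hterm hsb
  have h3 : Vval f c γ π x ≤ ∑' t : ℕ, K * ‖y t‖ ^ 2 :=
    Summable.tsum_le_tsum hterm hsa hsb
  have h4 : (∑' t : ℕ, K * ‖y t‖ ^ 2) = K * ∑' t : ℕ, ‖y t‖ ^ 2 := tsum_mul_left
  have h5 : K * (∑' t : ℕ, ‖y t‖ ^ 2) ≤ K * (θ * ‖x‖ ^ 2) :=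
    mul_le_mul_of_nonneg_left (hθ x) hKnn
  calc Vval f c γ π x ≤ K * ∑' t : ℕ, ‖y t‖ ^ 2 := by rw [← h4]; exact h3
    _ ≤ K * (θ * ‖x‖ ^ 2) := h5
    _ = lam / 2 * (1 + κ ^ 2) * θ * ‖x‖ ^ 2 := by rw [hK]; ring
end

section
/- Let V : ℝⁿ → ℝ≥0, let π be a feedback policy, and suppose the Bellman recursion V(x) = c_π(x) + γ V(f_π(x)) holds for all x, where γ ∈ (0,1). Assume c_π(x) ≥ (μ/2)‖x‖² and V(x) ≤ B‖x‖² for all x, with constants μ > 0 and B ≥ μ/2, and set γ₀ = 1 − μ/(2B). If γ ∈ (γ₀, 1), then V(f_π(x)) ≤ (γ₀/γ) V(x) for every x ∈ ℝⁿ; in particular the value function strictly decreases by a constant factor along closed-loop trajectories. -/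
/-!
STATEMENT 7: If a nonnegative `V` satisfies the Bellman recursion
`V(x) = c_π(x) + γ V(f_π(x))` with `c_π(x) ≥ (μ/2)‖x‖²` and `V(x) ≤ B‖x‖²`,
where `μ > 0`, `B ≥ μ/2`, `γ₀ = 1 − μ/(2B)`, and `γ ∈ (γ₀, 1)`, then
`V(f_π(x)) ≤ (γ₀/γ) V(x)` for every `x`.
-/

theorem value_decrease_along_trajectory {n m : ℕ}
    (f : EuclideanSpace ℝ (Fin n) → EuclideanSpace ℝ (Fin m) → EuclideanSpace ℝ (Fin n))
    (π : EuclideanSpace ℝ (Fin n) → EuclideanSpace ℝ (Fin m))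
    (c : EuclideanSpace ℝ (Fin n) → EuclideanSpace ℝ (Fin m) → ℝ)
    (V : EuclideanSpace ℝ (Fin n) → ℝ)
    (hV_nonneg : ∀ x, 0 ≤ V x)
    (γ μ B γ₀ : ℝ) (hμ : 0 < μ) (hB : μ / 2 ≤ B)
    (hγ₀ : γ₀ = 1 - μ / (2 * B))
    (hγ : γ ∈ Set.Ioo γ₀ 1)
    (hbellman : ∀ x, V x = c x (π x) + γ * V (f x (π x)))
    (hc_lb : ∀ x, μ / 2 * ‖x‖ ^ 2 ≤ c x (π x))
    (hV_ub : ∀ x, V x ≤ B * ‖x‖ ^ 2) :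
    ∀ x, V (f x (π x)) ≤ γ₀ / γ * V x := by
  intro x
  have hB0 : 0 < B := lt_of_lt_of_le (half_pos hμ) hB
  have hγ0 : 0 < γ := lt_of_le_of_lt (by
      rw [hγ₀]; have : μ / (2 * B) ≤ 1 := by
        rw [div_le_one (by linarith)]; linarith
      linarith) hγ.1
  have h1 : (1 - γ₀) * V x ≤ μ / 2 * ‖x‖ ^ 2 := by
    have : (1 - γ₀) * V x ≤ μ / (2 * B) * (B * ‖x‖ ^ 2) := by
      have h := mul_le_mul_of_nonneg_left (hV_ub x)
        (le_of_lt (div_pos hμ (by linarith : (0:ℝ) < 2*B)))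
      rw [hγ₀]; linarith
    calc (1 - γ₀) * V x ≤ μ / (2 * B) * (B * ‖x‖ ^ 2) := this
      _ = μ / 2 * ‖x‖ ^ 2 := by field_simp
  have h2 : γ * V (f x (π x)) ≤ γ₀ * V x := by
    have hb := hbellman x
    have hc := hc_lb x
    linarith
  rw [div_mul_eq_mul_div, le_div_iff₀ hγ0]
  linarith
end

section
/- Let f be Lipschitz in the control with constant ℓ_f^u (‖f(x,u₁) − f(x,u₂)‖ ≤ ℓ_f^u‖u₁ − u₂‖). Let π* and π̂ be feedback policies such that the closed-loop map f_{π*} is Lipschitz on B_r(0) with constant ℓ < 1 and maps B_r(0) into itself. Fix x ∈ B_r(0), t ∈ ℕ, and suppose the learned-policy iterates x̂_τ = f_{π̂}^τ(x) lie in B_r(0) for all 0 ≤ τ < t. Then ‖f_{π̂}^t(x) − f_{π*}^t(x)‖ ≤ ℓ_f^u ((1 − ℓ^t)/(1 − ℓ)) · max_{0 ≤ τ < t} ‖π̂(x̂_τ) − π*(x̂_τ)‖. -/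
/-!
STATEMENT 9: One-step-error accumulation bound. If `f` is `ℓ_f^u`-Lipschitz in the
control, `f_{π*}` is `ℓ`-Lipschitz on `B_r(0)` with `ℓ < 1` and maps `B_r(0)` into itself,
`x ∈ B_r(0)`, and the learned-policy iterates `x̂_τ = f_{π̂}^τ(x)` lie in `B_r(0)` for all
`0 ≤ τ < t`, then
`‖f_{π̂}^t(x) − f_{π*}^t(x)‖ ≤ ℓ_f^u ((1−ℓ^t)/(1−ℓ)) · max_{0 ≤ τ < t} ‖π̂(x̂_τ) − π*(x̂_τ)‖`.
-/

open Metric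

theorem trajectory_deviation_bound {n m : ℕ}
    (f : EuclideanSpace ℝ (Fin n) → EuclideanSpace ℝ (Fin m) → EuclideanSpace ℝ (Fin n))
    (ℓfu : ℝ) (hℓfu : 0 ≤ ℓfu)
    (hf_lip : ∀ x u₁ u₂, ‖f x u₁ - f x u₂‖ ≤ ℓfu * ‖u₁ - u₂‖)
    (r : ℝ)
    (πstar πhat : EuclideanSpace ℝ (Fin n) → EuclideanSpace ℝ (Fin m))
    (ℓ : ℝ) (hℓ0 : 0 ≤ ℓ) (hℓ1 : ℓ < 1)
    (hstar_lip : ∀ x ∈ closedBall (0 : EuclideanSpace ℝ (Fin n)) r,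
      ∀ y ∈ closedBall (0 : EuclideanSpace ℝ (Fin n)) r,
        ‖cloop f πstar x - cloop f πstar y‖ ≤ ℓ * ‖x - y‖)
    (hstar_inv : ∀ x ∈ closedBall (0 : EuclideanSpace ℝ (Fin n)) r,
      cloop f πstar x ∈ closedBall (0 : EuclideanSpace ℝ (Fin n)) r)
    (x : EuclideanSpace ℝ (Fin n))
    (hx : x ∈ closedBall (0 : EuclideanSpace ℝ (Fin n)) r)
    (t : ℕ)
    (hiter : ∀ τ < t, (cloop f πhat)^[τ] x ∈ closedBall (0 : EuclideanSpace ℝ (Fin n)) r) :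
    ‖(cloop f πhat)^[t] x - (cloop f πstar)^[t] x‖
      ≤ ℓfu * ((1 - ℓ ^ t) / (1 - ℓ)) *
        sSup {s : ℝ | ∃ τ < t,
          s = ‖πhat ((cloop f πhat)^[τ] x) - πstar ((cloop f πhat)^[τ] x)‖} := by

  have hstarball : ∀ k, (cloop f πstar)^[k] x ∈ closedBall (0 : EuclideanSpace ℝ (Fin n)) r := by
    intro k
    induction k with
    | zero => simpa using hx
    | succ k ih =>
        rw [Function.iterate_succ_apply']
        exact hstar_inv _ ih
  set g : ℕ → ℝ := fun τ => ‖πhat ((cloop f πhat)^[τ] x) - πstar ((cloop f πhat)^[τ] x)‖ with hg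
  have hSdef : ∀ k : ℕ, {s : ℝ | ∃ τ < k, s = g τ} = g '' Set.Iio k := by
    intro k; ext s
    simp only [Set.mem_setOf_eq, Set.mem_image, Set.mem_Iio]
    constructor
    · rintro ⟨τ, h1, h2⟩; exact ⟨τ, h1, h2.symm⟩
    · rintro ⟨τ, h1, h2⟩; exact ⟨τ, h1, h2.symm⟩
  have hbdd : ∀ k : ℕ, BddAbove {s : ℝ | ∃ τ < k, s = g τ} := by
    intro k; rw [hSdef k]; exact ((Set.finite_Iio k).image g).bddAbove
  have hMnonneg : ∀ k : ℕ, 0 ≤ sSup {s : ℝ | ∃ τ < k, s = g τ} := by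
    intro k
    apply Real.sSup_nonneg
    rintro s ⟨τ, _, rfl⟩; exact norm_nonneg _
  have hle : ∀ τ k : ℕ, τ < k → g τ ≤ sSup {s : ℝ | ∃ τ < k, s = g τ} := by
    intro τ k h
    exact le_csSup (hbdd k) ⟨τ, h, rfl⟩
  have hmono : ∀ k : ℕ, sSup {s : ℝ | ∃ τ < k, s = g τ}
      ≤ sSup {s : ℝ | ∃ τ < k + 1, s = g τ} := by
    intro k
    apply Real.sSup_le _ (hMnonneg (k+1))
    rintro s ⟨τ, hτ, rfl⟩
    exact hle τ (k+1) (hτ.trans (Nat.lt_succ_self k))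
  have key : ∀ k : ℕ,
      (∀ τ < k, (cloop f πhat)^[τ] x ∈ closedBall (0 : EuclideanSpace ℝ (Fin n)) r) →
      ‖(cloop f πhat)^[k] x - (cloop f πstar)^[k] x‖
        ≤ ℓfu * (∑ i ∈ Finset.range k, ℓ ^ i) * sSup {s : ℝ | ∃ τ < k, s = g τ} := by
    intro k
    induction k with
    | zero => intro _; simp
    | succ k ih =>
        intro hit
        have ihk := ih (fun τ hτ => hit τ (hτ.trans (Nat.lt_succ_self k)))
        set y := (cloop f πhat)^[k] x with hy
        set z := (cloop f πstar)^[k] x with hz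
        have hyball : y ∈ closedBall (0 : EuclideanSpace ℝ (Fin n)) r :=
          hit k (Nat.lt_succ_self k)
        have hzball := hstarball k
        have step1 : ‖(cloop f πhat)^[k+1] x - (cloop f πstar)^[k+1] x‖
            ≤ ℓfu * g k + ℓ * ‖y - z‖ := by
          rw [Function.iterate_succ_apply', Function.iterate_succ_apply']
          calc ‖cloop f πhat y - cloop f πstar z‖
              = ‖(cloop f πhat y - cloop f πstar y) + (cloop f πstar y - cloop f πstar z)‖ := by
                rw [sub_add_sub_cancel]
            _ ≤ ‖cloop f πhat y - cloop f πstar y‖ + ‖cloop f πstar y - cloop f πstar z‖ :=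
                norm_add_le _ _
            _ ≤ ℓfu * g k + ℓ * ‖y - z‖ := by
                apply add_le_add
                · exact hf_lip y (πhat y) (πstar y)
                · exact hstar_lip y hyball z hzball
        set M := sSup {s : ℝ | ∃ τ < k + 1, s = g τ} with hM
        have hMn := hMnonneg (k+1)
        calc ‖(cloop f πhat)^[k+1] x - (cloop f πstar)^[k+1] x‖
            ≤ ℓfu * g k + ℓ * ‖y - z‖ := step1
          _ ≤ ℓfu * M + ℓ * (ℓfu * (∑ i ∈ Finset.range k, ℓ ^ i)
                * sSup {s : ℝ | ∃ τ < k, s = g τ}) := by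
              apply add_le_add
              · exact mul_le_mul_of_nonneg_left (hle k (k+1) (Nat.lt_succ_self k)) hℓfu
              · exact mul_le_mul_of_nonneg_left ihk hℓ0
          _ ≤ ℓfu * M + ℓ * (ℓfu * (∑ i ∈ Finset.range k, ℓ ^ i) * M) := by
              apply add_le_add le_rfl
              apply mul_le_mul_of_nonneg_left _ hℓ0
              apply mul_le_mul_of_nonneg_left (hmono k)
              exact mul_nonneg hℓfu (Finset.sum_nonneg fun i _ => pow_nonneg hℓ0 i)
          _ = ℓfu * (∑ i ∈ Finset.range (k+1), ℓ ^ i) * M := by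
              rw [geom_sum_succ]
              ring
  have hkey := key t hiter
  have hsum : (∑ i ∈ Finset.range t, ℓ ^ i) = (1 - ℓ ^ t) / (1 - ℓ) := by
    rw [geom_sum_eq hℓ1.ne t]
    rw [div_eq_div_iff (by linarith) (by linarith : (1:ℝ) - ℓ ≠ 0)]
    ring
  rw [hsum] at hkey
  exact hkey
end

section
/- Let f be Lipschitz in the control with constant ℓ_f^u. Let π* be a policy whose closed-loop map f_{π*} is Lipschitz on B_r(0) with constant ℓ < 1, maps B_r(0) into itself, and satisfies f_{π*}(0) = 0. Let π̂ be a policy with sup_{z ∈ B_r(0)} ‖π̂(z) − π*(z)‖ ≤ η, and let r' = r − ℓ_f^u η/(1 − ℓ) with r' > 0. Then for every x ∈ B_{r'}(0), the learned-policy iterates satisfy f_{π̂}^t(x) ∈ B_r(0) for all t ∈ ℕ, and moreover ‖f_{π̂}^t(x)‖ ≤ ℓ^t ‖x‖ + ℓ_f^u ((1 − ℓ^t)/(1 − ℓ)) η for all t. -/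
/-!
STATEMENT 10: Invariance and decay under the learned policy. If `f` is `ℓ_f^u`-Lipschitz
in the control, `f_{π*}` is `ℓ`-Lipschitz on `B_r(0)` with `ℓ < 1`, maps `B_r(0)` into
itself and satisfies `f_{π*}(0) = 0`, and `sup_{z ∈ B_r(0)} ‖π̂(z) − π*(z)‖ ≤ η` with
`r' = r − ℓ_f^u η/(1−ℓ) > 0`, then for every `x ∈ B_{r'}(0)` and every `t`,
`f_{π̂}^t(x) ∈ B_r(0)` and `‖f_{π̂}^t(x)‖ ≤ ℓ^t ‖x‖ + ℓ_f^u ((1−ℓ^t)/(1−ℓ)) η`.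
-/

open Metric

theorem learned_policy_invariance_and_decay {n m : ℕ}
    (f : EuclideanSpace ℝ (Fin n) → EuclideanSpace ℝ (Fin m) → EuclideanSpace ℝ (Fin n))
    (ℓfu : ℝ) (hℓfu : 0 ≤ ℓfu)
    (hf_lip : ∀ x u₁ u₂, ‖f x u₁ - f x u₂‖ ≤ ℓfu * ‖u₁ - u₂‖)
    (r : ℝ)
    (πstar πhat : EuclideanSpace ℝ (Fin n) → EuclideanSpace ℝ (Fin m))
    (ℓ : ℝ) (hℓ0 : 0 ≤ ℓ) (hℓ1 : ℓ < 1)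
    (hstar_lip : ∀ x ∈ closedBall (0 : EuclideanSpace ℝ (Fin n)) r,
      ∀ y ∈ closedBall (0 : EuclideanSpace ℝ (Fin n)) r,
        ‖cloop f πstar x - cloop f πstar y‖ ≤ ℓ * ‖x - y‖)
    (hstar_inv : ∀ x ∈ closedBall (0 : EuclideanSpace ℝ (Fin n)) r,
      cloop f πstar x ∈ closedBall (0 : EuclideanSpace ℝ (Fin n)) r)
    (hstar0 : cloop f πstar 0 = 0)
    (η : ℝ) (hη0 : 0 ≤ η)
    (hclose : ∀ z ∈ closedBall (0 : EuclideanSpace ℝ (Fin n)) r, ‖πhat z - πstar z‖ ≤ η)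
    (r' : ℝ) (hr' : r' = r - ℓfu * η / (1 - ℓ)) (hr'pos : 0 < r') :
    ∀ x ∈ closedBall (0 : EuclideanSpace ℝ (Fin n)) r', ∀ t : ℕ,
      (cloop f πhat)^[t] x ∈ closedBall (0 : EuclideanSpace ℝ (Fin n)) r ∧
      ‖(cloop f πhat)^[t] x‖ ≤ ℓ ^ t * ‖x‖ + ℓfu * ((1 - ℓ ^ t) / (1 - ℓ)) * η := by

  have h1ℓ : (0:ℝ) < 1 - ℓ := by linarith
  have hterm : ℓfu * η / (1 - ℓ) ≤ r - r' := by rw [hr']; ring_nf; linarith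
  have hterm0 : 0 ≤ ℓfu * η / (1 - ℓ) := by positivity
  have hr'r : r' ≤ r := by linarith
  intro x hx t
  induction t with
  | zero =>
    simp only [Function.iterate_zero, id_eq, pow_zero]
    refine ⟨?_, by simp⟩
    simp only [mem_closedBall, dist_zero_right] at hx ⊢
    linarith
  | succ t ih =>
    obtain ⟨hmem, hbd⟩ := ih
    set y := (cloop f πhat)^[t] x with hy
    have hnx : ‖x‖ ≤ r' := by simpa [dist_zero_right] using hx
    have hny : ‖y‖ ≤ r := by simpa [dist_zero_right] using hmem
    have h0mem : (0 : EuclideanSpace ℝ (Fin n)) ∈ closedBall (0 : EuclideanSpace ℝ (Fin n)) r := by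
      simp; linarith
    have hdiff : ‖cloop f πhat y - cloop f πstar y‖ ≤ ℓfu * η := by
      calc ‖cloop f πhat y - cloop f πstar y‖ ≤ ℓfu * ‖πhat y - πstar y‖ := hf_lip y _ _
        _ ≤ ℓfu * η := by
          have := hclose y hmem
          exact mul_le_mul_of_nonneg_left this hℓfu
    have hstarb : ‖cloop f πstar y‖ ≤ ℓ * ‖y‖ := by
      have := hstar_lip y hmem 0 h0mem
      simpa [hstar0] using this
    have key : ‖(cloop f πhat)^[t+1] x‖ ≤ ℓ * ‖y‖ + ℓfu * η := by
      rw [Function.iterate_succ_apply']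
      calc ‖cloop f πhat y‖
          ≤ ‖cloop f πhat y - cloop f πstar y‖ + ‖cloop f πstar y‖ := by
            simpa using norm_add_le (cloop f πhat y - cloop f πstar y) (cloop f πstar y)
        _ ≤ ℓfu * η + ℓ * ‖y‖ := add_le_add hdiff hstarb
        _ = ℓ * ‖y‖ + ℓfu * η := by ring
    have hbd' : ‖(cloop f πhat)^[t+1] x‖ ≤ ℓ ^ (t+1) * ‖x‖ + ℓfu * ((1 - ℓ ^ (t+1)) / (1 - ℓ)) * η := by
      have h2 : ℓ * ‖y‖ ≤ ℓ * (ℓ ^ t * ‖x‖ + ℓfu * ((1 - ℓ ^ t) / (1 - ℓ)) * η) :=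
        mul_le_mul_of_nonneg_left hbd hℓ0
      have heq : ℓ * (ℓ ^ t * ‖x‖ + ℓfu * ((1 - ℓ ^ t) / (1 - ℓ)) * η) + ℓfu * η
          = ℓ ^ (t+1) * ‖x‖ + ℓfu * ((1 - ℓ ^ (t+1)) / (1 - ℓ)) * η := by
        field_simp
        ring
      linarith
    refine ⟨?_, hbd'⟩
    have hℓt : ℓ ^ (t+1) ≤ 1 := pow_le_one₀ hℓ0 hℓ1.le
    have hℓt0 : 0 ≤ ℓ ^ (t+1) := pow_nonneg hℓ0 _
    have hsec : ℓfu * ((1 - ℓ ^ (t+1)) / (1 - ℓ)) * η ≤ ℓfu * η / (1 - ℓ) := by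
      have hnum : 1 - ℓ ^ (t+1) ≤ 1 := by linarith
      calc ℓfu * ((1 - ℓ ^ (t+1)) / (1 - ℓ)) * η ≤ ℓfu * (1 / (1 - ℓ)) * η := by gcongr
        _ = ℓfu * η / (1 - ℓ) := by ring
    have hx0 : 0 ≤ ‖x‖ := norm_nonneg _
    have hfirst : ℓ ^ (t+1) * ‖x‖ ≤ r' := by
      calc ℓ ^ (t+1) * ‖x‖ ≤ 1 * ‖x‖ := mul_le_mul_of_nonneg_right hℓt hx0
        _ = ‖x‖ := one_mul _
        _ ≤ r' := hnx
    simp only [mem_closedBall, dist_zero_right]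
    linarith
end

section
/- Let f be Lipschitz in the control with constant ℓ_f^u. Let π* be a policy whose closed-loop map f_{π*} is Lipschitz on B_r(0) with constant ℓ < 1, maps B_r(0) into itself, and satisfies f_{π*}(0) = 0. Let π̂ : ℝⁿ → ℝᵐ be Lipschitz with constant α and satisfy sup_{z ∈ B_r(0)} ‖π̂(z) − π*(z)‖ ≤ ε. Let (δ_t)_{t∈ℕ} be any perturbation sequence with ‖δ_t‖ ≤ ζ for all t, and define the perturbed closed-loop trajectory by x̃_0 = x and x̃_{t+1} = f(x̃_t, π̂(x̃_t + δ_t)). Set r' = r − ℓ_f^u (α ζ + ε)/(1 − ℓ) and assume r' > 0. Then for every x ∈ B_{r'}(0): (a) x̃_t ∈ B_r(0) for all t ∈ ℕ, and (b) ‖x̃_t − f_{π*}^t(x)‖ ≤ ℓ_f^u ((1 − ℓ^t)/(1 − ℓ)) (α ζ + ε) for all t ∈ ℕ. -/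
/-!
STATEMENT 11: Robust stability under the perturbed learned policy. If `f` is
`ℓ_f^u`-Lipschitz in the control, `f_{π*}` is `ℓ`-Lipschitz on `B_r(0)` with `ℓ < 1`,
maps `B_r(0)` into itself and satisfies `f_{π*}(0) = 0`, `π̂` is `α`-Lipschitz with
`sup_{z ∈ B_r(0)} ‖π̂(z) − π*(z)‖ ≤ ε`, the perturbations satisfy `‖δ_t‖ ≤ ζ`, and
`r' = r − ℓ_f^u (αζ + ε)/(1−ℓ) > 0`, then for every `x ∈ B_{r'}(0)` the perturbed
closed-loop trajectory `x̃_0 = x`, `x̃_{t+1} = f(x̃_t, π̂(x̃_t + δ_t))` satisfies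
(a) `x̃_t ∈ B_r(0)` and (b) `‖x̃_t − f_{π*}^t(x)‖ ≤ ℓ_f^u ((1−ℓ^t)/(1−ℓ)) (αζ + ε)`.
-/

open Metric

theorem robust_stability_learned_policy {n m : ℕ}
    (f : EuclideanSpace ℝ (Fin n) → EuclideanSpace ℝ (Fin m) → EuclideanSpace ℝ (Fin n))
    (ℓfu : ℝ) (hℓfu : 0 ≤ ℓfu)
    (hf_lip : ∀ x u₁ u₂, ‖f x u₁ - f x u₂‖ ≤ ℓfu * ‖u₁ - u₂‖)
    (r : ℝ)
    (πstar πhat : EuclideanSpace ℝ (Fin n) → EuclideanSpace ℝ (Fin m))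
    (ℓ : ℝ) (hℓ0 : 0 ≤ ℓ) (hℓ1 : ℓ < 1)
    (hstar_lip : ∀ x ∈ closedBall (0 : EuclideanSpace ℝ (Fin n)) r,
      ∀ y ∈ closedBall (0 : EuclideanSpace ℝ (Fin n)) r,
        ‖cloop f πstar x - cloop f πstar y‖ ≤ ℓ * ‖x - y‖)
    (hstar_inv : ∀ x ∈ closedBall (0 : EuclideanSpace ℝ (Fin n)) r,
      cloop f πstar x ∈ closedBall (0 : EuclideanSpace ℝ (Fin n)) r)
    (hstar0 : cloop f πstar 0 = 0)
    (α ε ζ : ℝ) (hα : 0 ≤ α) (hε : 0 ≤ ε) (hζ : 0 ≤ ζ)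
    (hπhat_lip : ∀ x y, ‖πhat x - πhat y‖ ≤ α * ‖x - y‖)
    (hclose : ∀ z ∈ closedBall (0 : EuclideanSpace ℝ (Fin n)) r, ‖πhat z - πstar z‖ ≤ ε)
    (r' : ℝ) (hr' : r' = r - ℓfu * (α * ζ + ε) / (1 - ℓ)) (hr'pos : 0 < r')
    (x : EuclideanSpace ℝ (Fin n)) (hx : x ∈ closedBall (0 : EuclideanSpace ℝ (Fin n)) r')
    (δ : ℕ → EuclideanSpace ℝ (Fin n)) (hδ : ∀ t, ‖δ t‖ ≤ ζ)
    (xt : ℕ → EuclideanSpace ℝ (Fin n))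
    (hx0 : xt 0 = x)
    (hrec : ∀ t, xt (t + 1) = f (xt t) (πhat (xt t + δ t))) :
    ∀ t : ℕ,
      xt t ∈ closedBall (0 : EuclideanSpace ℝ (Fin n)) r ∧
      ‖xt t - (cloop f πstar)^[t] x‖ ≤ ℓfu * ((1 - ℓ ^ t) / (1 - ℓ)) * (α * ζ + ε) := by

  have h1ℓ : (0:ℝ) < 1 - ℓ := by linarith
  have hCnn : 0 ≤ ℓfu * (α * ζ + ε) := by positivity
  have hr'r : r' ≤ r := by
    rw [hr']
    have : 0 ≤ ℓfu * (α * ζ + ε) / (1 - ℓ) := by positivity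
    linarith
  have hxr : x ∈ closedBall (0 : EuclideanSpace ℝ (Fin n)) r :=
    closedBall_subset_closedBall hr'r hx
  -- f*^t x stays in B_r and B_{r'}
  have hiter : ∀ t, (cloop f πstar)^[t] x ∈ closedBall (0 : EuclideanSpace ℝ (Fin n)) r ∧
      ‖(cloop f πstar)^[t] x‖ ≤ r' := by
    intro t
    induction t with
    | zero =>
      simp only [Function.iterate_zero, id_eq]
      exact ⟨hxr, mem_closedBall_zero_iff.mp hx⟩
    | succ t ih =>
      rw [Function.iterate_succ_apply']
      refine ⟨hstar_inv _ ih.1, ?_⟩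
      have := hstar_lip _ ih.1 0 (by simp [mem_closedBall]; linarith [hr'pos, hr'r])
      rw [hstar0, sub_zero, sub_zero] at this
      calc ‖cloop f πstar ((cloop f πstar)^[t] x)‖ ≤ ℓ * ‖(cloop f πstar)^[t] x‖ := this
        _ ≤ 1 * r' := by
          apply mul_le_mul (le_of_lt hℓ1) ih.2 (norm_nonneg _) zero_le_one
        _ = r' := one_mul r'
  intro t
  induction t with
  | zero =>
    constructor
    · simpa [hx0] using hxr
    · simp [hx0]
  | succ t ih =>
    obtain ⟨iha, ihb⟩ := ih
    have hfr := (hiter t).1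
    -- error bound (b) at t+1
    have hb : ‖xt (t + 1) - (cloop f πstar)^[t+1] x‖ ≤
        ℓfu * ((1 - ℓ ^ (t+1)) / (1 - ℓ)) * (α * ζ + ε) := by
      rw [hrec t, Function.iterate_succ_apply']
      have tri : ‖f (xt t) (πhat (xt t + δ t)) - cloop f πstar ((cloop f πstar)^[t] x)‖ ≤
          ‖f (xt t) (πhat (xt t + δ t)) - f (xt t) (πstar (xt t))‖ +
          ‖cloop f πstar (xt t) - cloop f πstar ((cloop f πstar)^[t] x)‖ := by
        simpa [cloop] using norm_sub_le_norm_sub_add_norm_sub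
          (f (xt t) (πhat (xt t + δ t))) (f (xt t) (πstar (xt t)))
          (cloop f πstar ((cloop f πstar)^[t] x))
      have h1 : ‖f (xt t) (πhat (xt t + δ t)) - f (xt t) (πstar (xt t))‖ ≤
          ℓfu * (α * ζ + ε) := by
        calc ‖f (xt t) (πhat (xt t + δ t)) - f (xt t) (πstar (xt t))‖
            ≤ ℓfu * ‖πhat (xt t + δ t) - πstar (xt t)‖ := hf_lip _ _ _
          _ ≤ ℓfu * (α * ζ + ε) := by
            apply mul_le_mul_of_nonneg_left _ hℓfu
            calc ‖πhat (xt t + δ t) - πstar (xt t)‖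
                ≤ ‖πhat (xt t + δ t) - πhat (xt t)‖ + ‖πhat (xt t) - πstar (xt t)‖ :=
                  norm_sub_le_norm_sub_add_norm_sub _ _ _
              _ ≤ α * ζ + ε := by
                have h2 : ‖πhat (xt t + δ t) - πhat (xt t)‖ ≤ α * ζ := by
                  calc ‖πhat (xt t + δ t) - πhat (xt t)‖ ≤ α * ‖(xt t + δ t) - xt t‖ :=
                        hπhat_lip _ _
                    _ = α * ‖δ t‖ := by rw [add_sub_cancel_left]
                    _ ≤ α * ζ := mul_le_mul_of_nonneg_left (hδ t) hα
                linarith [hclose (xt t) iha]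
      have h2 : ‖cloop f πstar (xt t) - cloop f πstar ((cloop f πstar)^[t] x)‖ ≤
          ℓ * ‖xt t - (cloop f πstar)^[t] x‖ := hstar_lip _ iha _ hfr
      have hℓt : (0:ℝ) ≤ ℓ ^ t := pow_nonneg hℓ0 t
      have key : ℓfu * (α * ζ + ε) + ℓ * (ℓfu * ((1 - ℓ ^ t) / (1 - ℓ)) * (α * ζ + ε)) =
          ℓfu * ((1 - ℓ ^ (t+1)) / (1 - ℓ)) * (α * ζ + ε) := by
        field_simp
        ring
      calc ‖f (xt t) (πhat (xt t + δ t)) - cloop f πstar ((cloop f πstar)^[t] x)‖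
          ≤ ℓfu * (α * ζ + ε) + ℓ * ‖xt t - (cloop f πstar)^[t] x‖ := by
            have := le_trans h2 (mul_le_mul_of_nonneg_left ihb hℓ0)
            linarith [tri, h1]
        _ ≤ ℓfu * (α * ζ + ε) + ℓ * (ℓfu * ((1 - ℓ ^ t) / (1 - ℓ)) * (α * ζ + ε)) := by
            nlinarith [mul_le_mul_of_nonneg_left ihb hℓ0]
        _ = _ := key
    refine ⟨?_, hb⟩
    rw [mem_closedBall, dist_zero_right]
    have h3 : ‖xt (t+1)‖ ≤ ‖xt (t+1) - (cloop f πstar)^[t+1] x‖ + ‖(cloop f πstar)^[t+1] x‖ := by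
      simpa using norm_add_le (xt (t+1) - (cloop f πstar)^[t+1] x) ((cloop f πstar)^[t+1] x)
    have hℓt : (0:ℝ) ≤ ℓ ^ (t+1) := pow_nonneg hℓ0 _
    have hboundfull : ℓfu * ((1 - ℓ ^ (t+1)) / (1 - ℓ)) * (α * ζ + ε) ≤
        ℓfu * (α * ζ + ε) / (1 - ℓ) := by
      have h4 : (1 - ℓ ^ (t+1)) / (1 - ℓ) ≤ 1 / (1 - ℓ) := by
        gcongr
        linarith
      have h5 : ℓfu * ((1 - ℓ ^ (t+1)) / (1 - ℓ)) * (α * ζ + ε) =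
          (ℓfu * (α * ζ + ε)) * ((1 - ℓ ^ (t+1)) / (1 - ℓ)) := by ring
      have h6 : ℓfu * (α * ζ + ε) / (1 - ℓ) = (ℓfu * (α * ζ + ε)) * (1 / (1 - ℓ)) := by ring
      rw [h5, h6]
      exact mul_le_mul_of_nonneg_left h4 hCnn
    have := (hiter (t+1)).2
    have hr'' : ℓfu * (α * ζ + ε) / (1 - ℓ) + r' = r := by rw [hr']; ring
    linarith
end
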